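/- Let p, q be distinct primes. The only way to factor x^2·Φ_p(x)·Φ_q(x) as a product P(x)·Q(x) of two polynomials with nonnegative integer coefficients satisfying P(0)=Q(0)=0, P(1)=p and Q(1)=q is P = x·Φ_p and Q = x·Φ_q. -/

import Mathlib

open Polynomial

theorem no_relabeling_two_primes (p q : ℕ) (hp : p.Prime) (hq : q.Prime) (hpq : p ≠ q)
    (P Q : ℤ[X]) (hP : ∀ n, 0 ≤ P.coeff n) (hQ : ∀ n, 0 ≤ Q.coeff n)
    (hP0 : P.eval 0 = 0) (hQ0 : Q.eval 0 = 0)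
    (hP1 : P.eval 1 = p) (hQ1 : Q.eval 1 = q)
    (hPQ : P * Q = X ^ 2 * cyclotomic p ℤ * cyclotomic q ℤ) :
    P = X * cyclotomic p ℤ ∧ Q = X * cyclotomic q ℤ := by
  obtain ⟨A, rfl⟩ : (X : ℤ[X]) ∣ P :=
    X_dvd_iff.2 (by rw [coeff_zero_eq_eval_zero]; exact hP0)
  obtain ⟨B, rfl⟩ : (X : ℤ[X]) ∣ Q :=
    X_dvd_iff.2 (by rw [coeff_zero_eq_eval_zero]; exact hQ0)
  have hA1 : A.eval 1 = (p : ℤ) := by simpa using hP1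
  have hB1 : B.eval 1 = (q : ℤ) := by simpa using hQ1
  have hAB : A * B = cyclotomic p ℤ * cyclotomic q ℤ := by
    have hX2 : (X : ℤ[X]) ^ 2 ≠ 0 := pow_ne_zero _ X_ne_zero
    apply mul_left_cancel₀ hX2
    calc (X : ℤ[X]) ^ 2 * (A * B) = X * A * (X * B) := by ring
      _ = X ^ 2 * cyclotomic p ℤ * cyclotomic q ℤ := hPQ
      _ = X ^ 2 * (cyclotomic p ℤ * cyclotomic q ℤ) := by ring
  have hprimeP : Prime (cyclotomic p ℤ) := (cyclotomic.irreducible hp.pos).prime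
  have hprimeQ : Prime (cyclotomic q ℤ) := (cyclotomic.irreducible hq.pos).prime
  haveI : Fact p.Prime := ⟨hp⟩
  haveI : Fact q.Prime := ⟨hq⟩
  have hpA : cyclotomic p ℤ ∣ A := by
    have hdvdAB : cyclotomic p ℤ ∣ A * B := by rw [hAB]; exact dvd_mul_right _ _
    rcases hprimeP.dvd_or_dvd hdvdAB with h | h
    · exact h
    · exfalso
      obtain ⟨D, hD⟩ := h
      have : (q : ℤ) = p * D.eval 1 := by
        have := congrArg (eval 1) hD
        rw [eval_mul, eval_one_cyclotomic_prime, hB1] at this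
        exact this
      have hdvd : (p : ℤ) ∣ (q : ℤ) := ⟨D.eval 1, this⟩
      exact hpq (Nat.prime_dvd_prime_iff_eq hp hq |>.1 (Int.natCast_dvd_natCast.1 hdvd))
  have hqB : cyclotomic q ℤ ∣ B := by
    have hdvdAB : cyclotomic q ℤ ∣ A * B := by rw [hAB]; exact dvd_mul_left _ _
    rcases hprimeQ.dvd_or_dvd hdvdAB with h | h
    · exfalso
      obtain ⟨D, hD⟩ := h
      have : (p : ℤ) = q * D.eval 1 := by
        have := congrArg (eval 1) hD
        rw [eval_mul, eval_one_cyclotomic_prime, hA1] at this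
        exact this
      have hdvd : (q : ℤ) ∣ (p : ℤ) := ⟨D.eval 1, this⟩
      exact hpq (Nat.prime_dvd_prime_iff_eq hq hp |>.1 (Int.natCast_dvd_natCast.1 hdvd)).symm
    · exact h
  obtain ⟨C, hC⟩ := hpA
  obtain ⟨D, hD⟩ := hqB
  have hne : cyclotomic p ℤ * cyclotomic q ℤ ≠ 0 :=
    mul_ne_zero hprimeP.ne_zero hprimeQ.ne_zero
  have hCD : C * D = 1 := by
    apply mul_left_cancel₀ hne
    rw [mul_one]
    calc cyclotomic p ℤ * cyclotomic q ℤ * (C * D)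
        = (cyclotomic p ℤ * C) * (cyclotomic q ℤ * D) := by ring
      _ = A * B := by rw [← hC, ← hD]
      _ = _ := hAB
  have hC1 : C.eval 1 = 1 := by
    have h1 : (p : ℤ) = p * C.eval 1 := by
      have := congrArg (eval 1) hC
      rw [eval_mul, eval_one_cyclotomic_prime, hA1] at this
      exact this
    have hp0 : (p : ℤ) ≠ 0 := Int.natCast_ne_zero.2 hp.pos.ne'
    exact mul_left_cancel₀ hp0 (h1.symm.trans (mul_one (p:ℤ)).symm)
  have hCunit : IsUnit C := IsUnit.of_mul_eq_one _ hCD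
  have hCeq : C = 1 := by
    obtain ⟨r, hr, hrC⟩ := Polynomial.isUnit_iff.1 hCunit
    have : r = 1 := by
      have := congrArg (eval 1) hrC
      rw [eval_C] at this
      rw [this, hC1]
    rw [← hrC, this, map_one]
  have hDeq : D = 1 := by rw [hCeq, one_mul] at hCD; exact hCD
  constructor
  · rw [hC, hCeq, mul_one]
  · rw [hD, hDeq, mul_one]
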